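/- Fix ℓ ≥ 1 and integers n ≥ k ≥ 1. Let z be the sequence with z_j = j! for 1 ≤ j ≤ ℓ and z_j = 0 for j > ℓ. Then B_{n,k}(z₁, z₂, …) = (n!/k!) · Σ_{j=0}^{⌊(n−k)/ℓ⌋} (−1)^j · C(k, j) · C(n − ℓj − 1, k − 1). -/

import Mathlib

/-- The invert transform of a sequence `x : ℕ → ℚ` (indexed from 1, `x 0` ignored):
`(𝒴x)(0) = 0` and `(𝒴x)(n) = x n + ∑_{j=1}^{n-1} x j * (𝒴x)(n-j)` for `n ≥ 1`. -/
def invert (x : ℕ → ℚ) : ℕ → ℚ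
  | 0 => 0
  | n + 1 => x (n + 1) + ∑ j ∈ Finset.range n, x (j + 1) * invert x (n - j)
  termination_by n => n
  decreasing_by omega

/-- The partial Bell polynomial `B_{n,k}(z₁, z₂, …)`, evaluated at a sequence of rationals
`z` (indexed from 1, `z 0` ignored): the sum over all finitely supported `α : ℕ → ℕ` with
`α 0 = 0`, `∑ i, α i = k` and `∑ i, i * α i = n` of `(n! / ∏ i, (α i)!) * ∏ i (z i / i!)^(α i)`. -/
def partialBell (n k : ℕ) (z : ℕ → ℚ) : ℚ :=
  ∑ α ∈ ((Finset.range (n + 1)).finsuppAntidiag k).filter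
      (fun α => (∑ i ∈ Finset.range (n + 1), i * α i) = n ∧ α 0 = 0),
    ((n.factorial : ℚ) / ∏ i ∈ Finset.range (n + 1), ((α i).factorial : ℚ)) *
      ∏ i ∈ Finset.range (n + 1), (z i / (i.factorial : ℚ)) ^ α i

open Finset PowerSeries in
lemma partialBell_eq (ℓ : ℕ) (n k : ℕ) (hk : 1 ≤ k)
    (z : ℕ → ℚ) (hz : ∀ j, 1 ≤ j → z j = if j ≤ ℓ then (j.factorial : ℚ) else 0) :
    partialBell n k z
      = ((n.factorial : ℚ) / (k.factorial : ℚ)) *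
        (PowerSeries.coeff n)
          ((∑ i ∈ Finset.Icc 1 n, PowerSeries.C (if i ≤ ℓ then (1:ℚ) else 0)
              * PowerSeries.X ^ i) ^ k) := by
  set w : ℕ → ℚ := fun i => if i ≤ ℓ then (1:ℚ) else 0 with hw
  have hsub : Finset.Icc 1 n ⊆ Finset.range (n + 1) := by
    intro x hx; rw [mem_Icc] at hx; rw [mem_range]; omega
  -- Step 1: compute the coefficient via the multinomial theorem
  have hprodX : ∀ f : ℕ → ℕ, ∏ i ∈ Icc 1 n, (C (R := ℚ) (w i) * X ^ i) ^ f i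
      = C (R := ℚ) (∏ i ∈ Icc 1 n, w i ^ f i) * X ^ (∑ i ∈ Icc 1 n, i * f i) := by
    intro f
    simp_rw [mul_pow, ← map_pow, ← pow_mul]
    rw [prod_mul_distrib, ← map_prod, Finset.prod_pow_eq_pow_sum]
  have hcoeff : (PowerSeries.coeff n)
        ((∑ i ∈ Finset.Icc 1 n, C (R := ℚ) (w i) * X ^ i) ^ k)
      = ∑ f ∈ (Finset.piAntidiag (Icc 1 n) k).filter
            (fun f => n = ∑ i ∈ Icc 1 n, i * f i),
          (Nat.multinomial (Icc 1 n) f : ℚ) * ∏ i ∈ Icc 1 n, w i ^ f i := by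
    rw [Finset.sum_pow_eq_sum_piAntidiag, map_sum, sum_filter]
    refine sum_congr rfl fun f hf => ?_
    rw [hprodX, ← map_natCast (C (R := ℚ)) (Nat.multinomial (Icc 1 n) f), ← mul_assoc, ← map_mul,
      coeff_C_mul, coeff_X_pow]
    split_ifs with h
    · rw [mul_one]
    · rw [mul_zero]
  rw [hcoeff, mul_sum]
  -- Step 2: bijection between the two index sets
  rw [partialBell]
  refine Finset.sum_nbij' (fun α => ⇑α)
    (fun f => Finsupp.onFinset (Icc 1 n) (fun i => if i ∈ Icc 1 n then f i else 0)
      (fun i h => by by_contra hc; simp [hc] at h)) ?_ ?_ ?_ ?_ ?_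
  · -- hi : maps into target
    intro α hα
    rw [mem_filter, mem_finsuppAntidiag] at hα
    obtain ⟨⟨hsumk, hsupp⟩, hsumn, h0⟩ := hα
    have hzero : ∀ x ∈ range (n + 1), x ∉ Icc 1 n → α x = 0 := by
      intro x hx hx'
      rw [mem_range] at hx; rw [mem_Icc] at hx'
      have : x = 0 := by omega
      rw [this]; exact h0
    rw [mem_filter, mem_piAntidiag]
    refine ⟨⟨?_, ?_⟩, ?_⟩
    · rw [Finset.sum_subset hsub hzero]; exact hsumk
    · intro i hi
      rw [mem_Icc]
      have hmem : i ∈ α.support := Finsupp.mem_support_iff.2 hi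
      have := hsupp hmem
      rw [mem_range] at this
      have : i ≠ 0 := fun h => hi (h ▸ h0)
      omega
    · rw [Finset.sum_subset hsub (fun x hx hx' => ?_)]
      · exact hsumn.symm
      · rw [mem_range] at hx; rw [mem_Icc] at hx'
        have : x = 0 := by omega
        rw [this, zero_mul]
  · -- hj
    intro f hf
    rw [mem_filter, mem_piAntidiag] at hf
    obtain ⟨⟨hsumk, hsupp⟩, hsumn⟩ := hf
    have happ : ∀ i, (Finsupp.onFinset (Icc 1 n) (fun i => if i ∈ Icc 1 n then f i else 0)
        (fun i h => by by_contra hc; simp [hc] at h)) i = f i := by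
      intro i
      rw [Finsupp.onFinset_apply]
      by_cases h : i ∈ Icc 1 n
      · rw [if_pos h]
      · rw [if_neg h]
        by_contra hc
        exact h (hsupp i fun h' => hc h'.symm)
    rw [mem_filter, mem_finsuppAntidiag]
    simp only [happ]
    refine ⟨⟨?_, ?_⟩, ?_, ?_⟩
    · rw [← Finset.sum_subset hsub (fun x hx hx' => ?_)]
      · exact hsumk
      · by_contra hc
        exact hx' (hsupp x hc)
    · intro x hx
      rw [Finsupp.mem_support_iff] at hx
      simp only [happ] at hx
      exact hsub (hsupp x hx)
    · rw [← Finset.sum_subset hsub (fun x hx hx' => ?_)]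
      · exact hsumn.symm
      · by_contra hc
        have := hsupp x (fun h => hc (by rw [h, mul_zero]))
        exact hx' this
    · have : (0:ℕ) ∉ Icc 1 n := by simp
      by_contra hc
      exact this (hsupp 0 hc)
  · -- left inverse
    intro α hα
    rw [mem_filter, mem_finsuppAntidiag] at hα
    obtain ⟨⟨hsumk, hsupp⟩, hsumn, h0⟩ := hα
    ext i
    rw [Finsupp.onFinset_apply]
    by_cases h : i ∈ Icc 1 n
    · rw [if_pos h]
    · rw [if_neg h]
      by_contra hc
      have hmem : i ∈ α.support := Finsupp.mem_support_iff.2 fun h' => hc h'.symm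
      have := hsupp hmem
      rw [mem_range] at this
      rw [mem_Icc] at h
      have hi0 : i = 0 := by omega
      exact hc (by rw [hi0, h0])
  · -- right inverse
    intro f hf
    rw [mem_filter, mem_piAntidiag] at hf
    obtain ⟨⟨hsumk, hsupp⟩, hsumn⟩ := hf
    funext i
    simp only [Finsupp.onFinset_apply]
    by_cases h : i ∈ Icc 1 n
    · rw [if_pos h]
    · rw [if_neg h]
      by_contra hc
      exact h (hsupp i fun h' => hc h'.symm)
  · -- term equality
    intro α hα
    rw [mem_filter, mem_finsuppAntidiag] at hα
    obtain ⟨⟨hsumk, hsupp⟩, hsumn, h0⟩ := hα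
    have hsumk' : ∑ i ∈ Icc 1 n, α i = k := by
      rw [Finset.sum_subset hsub (fun x hx hx' => ?_)]
      · exact hsumk
      · rw [mem_range] at hx; rw [mem_Icc] at hx'
        have : x = 0 := by omega
        rw [this]; exact h0
    -- products of z-powers
    have hprodz : ∏ i ∈ Finset.range (n + 1), (z i / (i.factorial : ℚ)) ^ α i
        = ∏ i ∈ Icc 1 n, w i ^ α i := by
      rw [← Finset.prod_subset hsub (fun x hx hx' => ?_)]
      · refine prod_congr rfl fun i hi => ?_
        rw [mem_Icc] at hi
        rw [hz i hi.1]
        simp only [hw]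
        by_cases h : i ≤ ℓ
        · rw [if_pos h, if_pos h, div_self
              (show ((i.factorial : ℕ) : ℚ) ≠ 0 from Nat.cast_ne_zero.2 (Nat.factorial_ne_zero i))]
        · simp [h]
      · rw [mem_range] at hx; rw [mem_Icc] at hx'
        have hx0 : x = 0 := by omega
        rw [hx0, h0, pow_zero]
    -- factorial quotient vs multinomial
    have hprodfac : ∏ i ∈ Finset.range (n + 1), ((α i).factorial : ℚ)
        = ((∏ i ∈ Icc 1 n, (α i).factorial : ℕ) : ℚ) := by
      push_cast
      rw [← Finset.prod_subset hsub (fun x hx hx' => ?_)]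
      · rw [mem_range] at hx; rw [mem_Icc] at hx'
        have hx0 : x = 0 := by omega
        rw [hx0, h0]
        norm_num
    have hspec := Nat.multinomial_spec (Icc 1 n) ⇑α
    rw [hsumk'] at hspec
    have hPne : ((∏ i ∈ Icc 1 n, (α i).factorial : ℕ) : ℚ) ≠ 0 := by
      rw [Nat.cast_ne_zero]
      exact Finset.prod_ne_zero_iff.2 fun i _ => Nat.factorial_ne_zero _
    have hkfacne : ((k.factorial : ℕ) : ℚ) ≠ 0 :=
      Nat.cast_ne_zero.2 (Nat.factorial_ne_zero k)
    have hquot : (n.factorial : ℚ) / ∏ i ∈ Finset.range (n + 1), ((α i).factorial : ℚ)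
        = (n.factorial : ℚ) / (k.factorial : ℚ) * (Nat.multinomial (Icc 1 n) ⇑α : ℚ) := by
      rw [hprodfac]
      rw [div_mul_eq_mul_div, div_eq_div_iff hPne hkfacne]
      have hc : ((∏ i ∈ Icc 1 n, (α i).factorial : ℕ) : ℚ)
          * (Nat.multinomial (Icc 1 n) ⇑α : ℚ) = (k.factorial : ℚ) := by
        exact_mod_cast congrArg (Nat.cast : ℕ → ℚ) hspec
      linear_combination (-(n.factorial : ℚ)) * hc
    rw [hprodz, hquot]
    simp [mul_assoc]

open Finset PowerSeries in
lemma coeff_trunc_eq (ℓ n k : ℕ) :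
    (PowerSeries.coeff n)
        ((∑ i ∈ Finset.Icc 1 n, PowerSeries.C (if i ≤ ℓ then (1:ℚ) else 0) * PowerSeries.X ^ i) ^ k)
      = (PowerSeries.coeff n) ((∑ i ∈ Finset.Icc 1 ℓ, (PowerSeries.X : ℚ⟦X⟧) ^ i) ^ k) := by
  rw [PowerSeries.coeff_pow, PowerSeries.coeff_pow]
  refine sum_congr rfl fun l hl => prod_congr rfl fun i hi => ?_
  have hsum : ∑ t ∈ range k, l t = n := ((mem_finsuppAntidiag).1 hl).1
  have hle : l i ≤ n := hsum ▸ single_le_sum (f := fun t => l t) (fun _ _ => Nat.zero_le _) hi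
  rw [map_sum, map_sum]
  simp only [coeff_C_mul_X_pow, coeff_X_pow, sum_ite_eq, mem_Icc]
  by_cases h0 : 1 ≤ l i <;> by_cases h1 : l i ≤ ℓ <;> simp [h0, h1, hle]

open Finset PowerSeries in
lemma coeff_psi_pow (ℓ : ℕ) (hℓ : 1 ≤ ℓ) (n k : ℕ) (hk : 1 ≤ k) (hkn : k ≤ n) :
    (PowerSeries.coeff n) ((∑ i ∈ Finset.Icc 1 ℓ, (PowerSeries.X : ℚ⟦X⟧) ^ i) ^ k)
      = ∑ j ∈ Finset.range ((n - k) / ℓ + 1),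
          (-1 : ℚ) ^ j * (k.choose j : ℚ) * ((n - ℓ * j - 1).choose (k - 1) : ℚ) := by
  set U : ℚ⟦X⟧ := (invOneSubPow ℚ k).val with hUdef
  have hU : ((1 : ℚ⟦X⟧) - X) ^ k * U = 1 := by
    have h := (invOneSubPow ℚ k).inv_val
    rwa [invOneSubPow_inv_eq_one_sub_pow] at h
  have hΨ : (∑ i ∈ Icc 1 ℓ, (X : ℚ⟦X⟧) ^ i) = X * ∑ i ∈ range ℓ, X ^ i := by
    rw [← Finset.Ico_add_one_right_eq_Icc, sum_Ico_eq_sum_range, mul_sum]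
    simp [pow_succ, mul_comm, Nat.add_comm]
  have hG1 : (∑ i ∈ range ℓ, (X : ℚ⟦X⟧) ^ i) * (1 - X) = 1 - X ^ ℓ := by
    have h := geom_sum_mul (X : ℚ⟦X⟧) ℓ
    linear_combination -h
  have key : (∑ i ∈ Icc 1 ℓ, (X : ℚ⟦X⟧) ^ i) ^ k = X ^ k * ((1 - X ^ ℓ) ^ k * U) := by
    calc (∑ i ∈ Icc 1 ℓ, (X : ℚ⟦X⟧) ^ i) ^ k
        = (X * ∑ i ∈ range ℓ, X ^ i) ^ k * (((1:ℚ⟦X⟧) - X) ^ k * U) := by rw [hΨ, hU, mul_one]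
      _ = X ^ k * ((((∑ i ∈ range ℓ, (X:ℚ⟦X⟧) ^ i) * (1 - X)) ^ k) * U) := by
            rw [mul_pow, mul_pow]; ring
      _ = X ^ k * ((1 - X ^ ℓ) ^ k * U) := by rw [hG1]
  have hbinom : ((1 : ℚ⟦X⟧) - X ^ ℓ) ^ k
      = ∑ j ∈ range (k + 1), C (R := ℚ) ((-1) ^ j * (k.choose j : ℚ)) * X ^ (ℓ * j) := by
    have h1 : ((1 : ℚ⟦X⟧) - X ^ ℓ) = (C (R := ℚ) (-1)) * X ^ ℓ + 1 := by
      simp [sub_eq_neg_add]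
    rw [h1, add_pow]
    refine sum_congr rfl fun j _ => ?_
    rw [mul_pow, ← map_pow, one_pow, mul_one, ← pow_mul, map_mul,
      ← map_natCast (C (R := ℚ)) (k.choose j)]
    ring
  have expand : (∑ i ∈ Icc 1 ℓ, (X : ℚ⟦X⟧) ^ i) ^ k
      = ∑ j ∈ range (k + 1), C (R := ℚ) ((-1) ^ j * (k.choose j : ℚ)) * (X ^ (k + ℓ * j) * U) := by
    rw [key, hbinom, sum_mul, mul_sum]
    refine sum_congr rfl fun j _ => ?_
    rw [pow_add]; ring
  rw [expand, map_sum]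
  have hterm : ∀ j, (coeff n) (C (R := ℚ) ((-1) ^ j * (k.choose j : ℚ)) * (X ^ (k + ℓ * j) * U))
      = if k + ℓ * j ≤ n then
          (-1 : ℚ) ^ j * (k.choose j : ℚ) * ((n - ℓ * j - 1).choose (k - 1) : ℚ) else 0 := by
    intro j
    rw [coeff_C_mul, coeff_X_pow_mul']
    split_ifs with h
    · rw [hUdef, invOneSubPow_val_eq_mk_sub_one_add_choose_of_pos ℚ k hk, coeff_mk]
      have : k - 1 + (n - (k + ℓ * j)) = n - ℓ * j - 1 := by omega
      rw [this]
    · rw [mul_zero]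
  simp only [hterm]
  -- now: ∑ j ∈ range (k+1), F j = ∑ j ∈ range ((n-k)/ℓ + 1), term j
  set q := (n - k) / ℓ with hq
  set F : ℕ → ℚ := fun j => if k + ℓ * j ≤ n then
      (-1 : ℚ) ^ j * (k.choose j : ℚ) * ((n - ℓ * j - 1).choose (k - 1) : ℚ) else 0 with hF
  have h1 : ∑ j ∈ range (k + 1), F j = ∑ j ∈ range (max (k + 1) (q + 1)), F j := by
    apply sum_subset (range_subset_range.2 (le_max_left _ _))
    intro j _ hj
    rw [mem_range, not_lt] at hj
    have : k < j := by omega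
    simp only [hF]
    rw [Nat.choose_eq_zero_of_lt this]
    simp
  have h2 : ∑ j ∈ range (max (k + 1) (q + 1)), F j = ∑ j ∈ range (q + 1), F j := by
    symm
    apply sum_subset (range_subset_range.2 (le_max_right _ _))
    intro j _ hj
    rw [mem_range, not_lt] at hj
    have hjq : q + 1 ≤ j := hj
    have h3 : n - k < ℓ * (q + 1) := by
      have hmod : ℓ * q + (n - k) % ℓ = n - k := by rw [hq]; exact Nat.div_add_mod _ _
      have hmlt : (n - k) % ℓ < ℓ := Nat.mod_lt _ (by omega)
      have e1 : ℓ * (q + 1) = ℓ * q + ℓ := by ring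
      omega
    have h4 : ℓ * (q + 1) ≤ ℓ * j := Nat.mul_le_mul_left _ hjq
    have hno : ¬ (k + ℓ * j ≤ n) := by omega
    simp only [hF]
    rw [if_neg hno]
  rw [h1, h2]
  refine sum_congr rfl fun j hj => ?_
  rw [mem_range] at hj
  have hjq : j ≤ q := by omega
  have : ℓ * j ≤ n - k := by
    calc ℓ * j ≤ ℓ * q := Nat.mul_le_mul_left _ hjq
    _ ≤ n - k := by rw [hq, mul_comm]; exact Nat.div_mul_le_self _ _
  simp only [hF]
  rw [if_pos (show k + ℓ * j ≤ n by omega)]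

/-- Bell identity 1: for `ℓ ≥ 1` and `n ≥ k ≥ 1`,
`B_{n,k}(1!, 2!, …, ℓ!, 0, …) = (n!/k!) ∑_{j=0}^{⌊(n-k)/ℓ⌋} (-1)^j C(k,j) C(n-ℓj-1, k-1)`. -/
theorem stmt_16 (ℓ : ℕ) (hℓ : 1 ≤ ℓ) (n k : ℕ) (hk : 1 ≤ k) (hkn : k ≤ n)
    (z : ℕ → ℚ) (hz : ∀ j, 1 ≤ j → z j = if j ≤ ℓ then (j.factorial : ℚ) else 0) :
    partialBell n k z
      = ((n.factorial : ℚ) / (k.factorial : ℚ)) *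
          ∑ j ∈ Finset.range ((n - k) / ℓ + 1),
            (-1 : ℚ) ^ j * (k.choose j : ℚ) * ((n - ℓ * j - 1).choose (k - 1) : ℚ) := by
  rw [partialBell_eq ℓ n k hk z hz, coeff_trunc_eq ℓ n k,
    coeff_psi_pow ℓ hℓ n k hk hkn]
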